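/- Let n_s ≥ 1 be a natural number, Δ ∈ (0, 1] a real number, and t_1 ≥ 1 a natural number. If Δ/2 − 2·√(ln(t_1 + 1)/n_s) ≤ −2·√(ln(t_1 + 1)/(n_s + t_1)), then 2·√(ln(t_1 + 1)/n_s) ≥ Δ/2, and consequently t_1 ≥ exp(Δ²·n_s/16) − 1. -/
import Mathlib


/-- Key step of the UCB1-with-warm-start lower bound: if the lower confidence bound of arm 2
is below that of arm 1 after `t₁` plays of arm 1, then `2√(ln(t₁+1)/n_s) ≥ Δ/2`, and hence
`t₁ ≥ exp(Δ²·n_s/16) − 1`. -/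
theorem ucb_warmstart_first_pull (ns : ℕ) (hns : 1 ≤ ns) (Δ : ℝ) (hΔ0 : 0 < Δ) (hΔ1 : Δ ≤ 1)
    (t1 : ℕ) (ht1 : 1 ≤ t1)
    (h : Δ / 2 - 2 * Real.sqrt (Real.log ((t1 : ℝ) + 1) / ns)
        ≤ -(2 * Real.sqrt (Real.log ((t1 : ℝ) + 1) / ((ns : ℝ) + t1)))) :
    2 * Real.sqrt (Real.log ((t1 : ℝ) + 1) / ns) ≥ Δ / 2 ∧
      (t1 : ℝ) ≥ Real.exp (Δ ^ 2 * ns / 16) - 1 := by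
  have hsq : (0:ℝ) ≤ Real.sqrt (Real.log ((t1 : ℝ) + 1) / ((ns : ℝ) + t1)) := Real.sqrt_nonneg _
  have h1 : Δ / 2 ≤ 2 * Real.sqrt (Real.log ((t1 : ℝ) + 1) / ns) := by nlinarith
  refine ⟨h1, ?_⟩
  have hns' : (0:ℝ) < ns := by exact_mod_cast hns
  have hlog0 : (0:ℝ) ≤ Real.log ((t1 : ℝ) + 1) := by
    apply Real.log_nonneg
    have : (1:ℝ) ≤ (t1:ℝ) := by exact_mod_cast ht1
    linarith
  have hnn : (0:ℝ) ≤ Real.log ((t1 : ℝ) + 1) / ns := by positivity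
  have hsq2 : Δ / 4 ≤ Real.sqrt (Real.log ((t1 : ℝ) + 1) / ns) := by linarith
  have hle : (Δ / 4) ^ 2 ≤ Real.log ((t1 : ℝ) + 1) / ns := by
    have hs := Real.sq_sqrt hnn
    nlinarith [Real.sqrt_nonneg (Real.log ((t1 : ℝ) + 1) / ns)]
  have hle2 : Δ ^ 2 * ns / 16 ≤ Real.log ((t1 : ℝ) + 1) := by
    rw [le_div_iff₀ hns'] at hle
    nlinarith
  have := Real.exp_le_exp.mpr hle2
  rw [Real.exp_log (by positivity : (0:ℝ) < (t1:ℝ) + 1)] at this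
  linarith
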